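/- arXiv:2102.10768 — 3 statements merged into one kernel-verified Lean document; each statement's English description precedes it below -/
import Mathlib

section
/- With the notation of the workload estimation recursion, for every vertex u of the rooted spanning tree t and every v ∈ C(u), c_u(v) equals the number of maps M from the vertex set of the subtree of t rooted at u into the CST candidates such that M(u) = v, M(u') ∈ C(u') for every u' in the subtree, and every tree edge of the subtree maps to a CST edge. (Proof by structural induction on the subtree.) -/
set_option linter.unusedSectionVars false

section DPAux

variable {Vq Vg : Type*} [Fintype Vq] [DecidableEq Vq] [Fintype Vg] [DecidableEq Vg]
variable (parent : Vq → Vq) (r : Vq) (Desc : Vq → Vq → Prop)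
variable (C : Vq → Finset Vg) (N : Vq → Vq → Vg → Finset Vg)

/-- The type of partial homomorphisms on the subtree rooted at `u` sending `u` to `v`. -/
def Tm (u : Vq) (v : Vg) : Type _ :=
  {M : {x : Vq // Desc u x} → Vg //
    (∀ hu : Desc u u, M ⟨u, hu⟩ = v) ∧
    (∀ x, M x ∈ C x.1) ∧
    (∀ (x p : {y : Vq // Desc u y}), x.1 ≠ u → p.1 = parent x.1 →
      M x ∈ N p.1 x.1 (M p))}

instance (u : Vq) (v : Vg) : Finite (Tm parent Desc C N u v) := by
  unfold Tm; infer_instance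

/-- The children of `u`. -/
abbrev Ch (u : Vq) : Type _ := {w : Vq // w ≠ r ∧ parent w = u}

variable (u : Vq) (v : Vg)

/-- Glue a family of maps on the children subtrees to a map on the subtree of `u`. -/
def glue (ch : ∀ x : Vq, Desc u x → x ≠ u → Ch parent r u)
    (hch : ∀ x hd hne, Desc (ch x hd hne).1 x)
    (f : ∀ cw : Ch parent r u, Σ v' : ↥(N u cw.1 v), Tm parent Desc C N cw.1 ↑v') :
    {x : Vq // Desc u x} → Vg :=
  fun x => if h : x.1 = u then v else ((f (ch x.1 x.2 h)).2).1 ⟨x.1, hch x.1 x.2 h⟩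

lemma glue_spec (huniq : ∀ (a b : Ch parent r u) (x : Vq), Desc a.1 x → Desc b.1 x → a = b)
    (ch : ∀ x : Vq, Desc u x → x ≠ u → Ch parent r u)
    (hch : ∀ x hd hne, Desc (ch x hd hne).1 x)
    (f : ∀ cw : Ch parent r u, Σ v' : ↥(N u cw.1 v), Tm parent Desc C N cw.1 ↑v')
    (x : {y : Vq // Desc u y}) (hx : x.1 ≠ u) (cw : Ch parent r u) (hd : Desc cw.1 x.1) :
    glue parent r Desc C N u v ch hch f x = ((f cw).2).1 ⟨x.1, hd⟩ := by
  have h : ch x.1 x.2 hx = cw := huniq _ _ _ (hch _ _ _) hd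
  subst h
  simp only [glue, dif_neg hx]

/-- Split a map on the subtree of `u` into its restrictions to children subtrees. -/
def splitMap (hdc : ∀ (cw : Ch parent r u) (x : Vq), Desc cw.1 x → Desc u x)
    (hself : ∀ w : Vq, Desc w w)
    (hneu : ∀ (cw : Ch parent r u) (x : Vq), Desc cw.1 x → x ≠ u)
    (M : Tm parent Desc C N u v) (cw : Ch parent r u) :
    Σ v' : ↥(N u cw.1 v), Tm parent Desc C N cw.1 ↑v' :=
  ⟨⟨M.1 ⟨cw.1, hdc cw cw.1 (hself cw.1)⟩, by
      have h := M.2.2.2 ⟨cw.1, hdc cw cw.1 (hself cw.1)⟩ ⟨u, hself u⟩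
        (hneu cw cw.1 (hself cw.1)) cw.2.2.symm
      rwa [M.2.1 (hself u)] at h⟩,
   ⟨fun y => M.1 ⟨y.1, hdc cw y.1 y.2⟩,
    fun _ => rfl,
    fun y => M.2.2.1 ⟨y.1, hdc cw y.1 y.2⟩,
    fun x p hx hp => M.2.2.2 ⟨x.1, hdc cw x.1 x.2⟩ ⟨p.1, hdc cw p.1 p.2⟩
      (hneu cw x.1 x.2) hp⟩⟩

lemma sigma_tm_ext {w : Vq} (hself : Desc w w)
    {s t : Σ v' : ↥(N u w v), Tm parent Desc C N w ↑v'}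
    (h : (s.2).1 = (t.2).1) : s = t := by
  obtain ⟨⟨a, ha⟩, F, hF⟩ := s
  obtain ⟨⟨b, hb⟩, G, hG⟩ := t
  have h' : F = G := h
  subst h'
  have hab : a = b := (hF.1 hself).symm.trans (hG.1 hself)
  subst hab
  rfl

lemma nat_card_sigma' {ι : Type*} [Fintype ι] (β : ι → Type*) [∀ i, Finite (β i)] :
    Nat.card (Σ i, β i) = ∑ i, Nat.card (β i) := by
  letI : ∀ i, Fintype (β i) := fun i => Fintype.ofFinite _
  rw [Nat.card_eq_fintype_card, Fintype.card_sigma]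
  exact Finset.sum_congr rfl fun i _ => (Nat.card_eq_fintype_card).symm

lemma step_lemma
    (hv : v ∈ C u)
    (hself : ∀ w : Vq, Desc w w)
    (hdc : ∀ (cw : Ch parent r u) (x : Vq), Desc cw.1 x → Desc u x)
    (hneu : ∀ (cw : Ch parent r u) (x : Vq), Desc cw.1 x → x ≠ u)
    (huniq : ∀ (a b : Ch parent r u) (x : Vq), Desc a.1 x → Desc b.1 x → a = b)
    (hex : ∀ x : Vq, Desc u x → x ≠ u → ∃ cw : Ch parent r u, Desc cw.1 x)
    (hdpar : ∀ w x : Vq, Desc w x → x ≠ w → Desc w (parent x))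
    (hr : parent r = r)
    (hN : ∀ u uc v, N u uc v ⊆ C uc)
    (c : Vq → Vg → ℕ)
    (hc : c u v =
      ∏ uc ∈ Finset.univ.filter (fun x => x ≠ r ∧ parent x = u), ∑ v' ∈ N u uc v, c uc v')
    (IH : ∀ uc, uc ≠ r → parent uc = u →
      ∀ v' ∈ C uc, c uc v' = Nat.card (Tm parent Desc C N uc v')) :
    c u v = Nat.card (Tm parent Desc C N u v) := by
  choose ch hch using hex
  have hbij : Function.Bijective (splitMap parent r Desc C N u v hdc hself hneu) := by
    constructor
    · intro M1 M2 h
      apply Subtype.ext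
      funext x
      by_cases hx : x.1 = u
      · obtain ⟨x1, hx2⟩ := x
        simp only at hx
        subst hx
        exact (M1.2.1 hx2).trans (M2.2.1 hx2).symm
      · obtain ⟨cw, hd⟩ : ∃ cw : Ch parent r u, Desc cw.1 x.1 := ⟨ch x.1 x.2 hx, hch x.1 x.2 hx⟩
        exact congrArg (fun s => (s.2).1 ⟨x.1, hd⟩) (congrFun h cw)
    · intro f
      have hcond1 : ∀ hu : Desc u u,
          glue parent r Desc C N u v ch hch f ⟨u, hu⟩ = v := by
        intro hu; simp [glue]
      have hcond2 : ∀ x : {y : Vq // Desc u y},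
          glue parent r Desc C N u v ch hch f x ∈ C x.1 := by
        intro x
        by_cases hx : x.1 = u
        · have h1 : glue parent r Desc C N u v ch hch f x = v := by
            simp only [glue]; rw [dif_pos hx]
          rw [h1, hx]; exact hv
        · rw [glue_spec parent r Desc C N u v huniq ch hch f x hx
            (ch x.1 x.2 hx) (hch x.1 x.2 hx)]
          exact ((f (ch x.1 x.2 hx)).2).2.2.1 ⟨x.1, hch x.1 x.2 hx⟩
      have hcond3 : ∀ (x p : {y : Vq // Desc u y}), x.1 ≠ u → p.1 = parent x.1 →
          glue parent r Desc C N u v ch hch f x ∈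
            N p.1 x.1 (glue parent r Desc C N u v ch hch f p) := by
        intro x p hx hp
        by_cases hpu : p.1 = u
        · have hur : u ≠ r ∨ x.1 ≠ r := by
            by_cases hxr : x.1 = r
            · exfalso; apply hx; rw [hxr, ← hpu, hp, hxr, hr]
            · exact Or.inr hxr
          have hxr : x.1 ≠ r := by
            intro hxr; apply hx; rw [hxr, ← hpu, hp, hxr, hr]
          have hxp : parent x.1 = u := by rw [← hp, hpu]
          have hpv : glue parent r Desc C N u v ch hch f p = v := by
            simp only [glue]; rw [dif_pos hpu]
          rw [hpv, hpu,
            glue_spec parent r Desc C N u v huniq ch hch f x hx ⟨x.1, hxr, hxp⟩ (hself x.1)]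
          rw [((f ⟨x.1, hxr, hxp⟩).2).2.1 (hself x.1)]
          exact (f ⟨x.1, hxr, hxp⟩).1.2
        · set cw := ch x.1 x.2 hx with hcwdef
          have hd : Desc cw.1 x.1 := hch x.1 x.2 hx
          have hxcw : x.1 ≠ cw.1 := by
            intro h
            apply hpu
            rw [hp, h, cw.2.2]
          have hdp : Desc cw.1 p.1 := by rw [hp]; exact hdpar cw.1 x.1 hd hxcw
          rw [glue_spec parent r Desc C N u v huniq ch hch f x hx cw hd,
            glue_spec parent r Desc C N u v huniq ch hch f p hpu cw hdp]
          exact ((f cw).2).2.2.2 ⟨x.1, hd⟩ ⟨p.1, hdp⟩ hxcw hp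
      refine ⟨⟨glue parent r Desc C N u v ch hch f, hcond1, hcond2, hcond3⟩, ?_⟩
      funext cw
      apply sigma_tm_ext parent Desc C N u v (hself cw.1)
      funext y
      show glue parent r Desc C N u v ch hch f ⟨y.1, hdc cw y.1 y.2⟩ = ((f cw).2).1 y
      rw [glue_spec parent r Desc C N u v huniq ch hch f ⟨y.1, hdc cw y.1 y.2⟩
        (hneu cw y.1 y.2) cw y.2]
  calc c u v
      = ∏ uc ∈ Finset.univ.filter (fun x => x ≠ r ∧ parent x = u),
          ∑ v' ∈ N u uc v, c uc v' := hc
    _ = ∏ uc ∈ Finset.univ.filter (fun x => x ≠ r ∧ parent x = u),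
          ∑ v' ∈ N u uc v, Nat.card (Tm parent Desc C N uc v') := by
        refine Finset.prod_congr rfl fun uc huc => Finset.sum_congr rfl fun v' hv' => ?_
        rw [Finset.mem_filter] at huc
        exact IH uc huc.2.1 huc.2.2 v' (hN u uc v hv')
    _ = ∏ cw : Ch parent r u, ∑ v' ∈ N u cw.1 v, Nat.card (Tm parent Desc C N cw.1 v') := by
        exact Finset.prod_subtype _ (by simp) _
    _ = ∏ cw : Ch parent r u, ∑ v' : ↥(N u cw.1 v), Nat.card (Tm parent Desc C N cw.1 ↑v') := by
        exact Finset.prod_congr rfl fun cw _ => (Finset.sum_coe_sort _ _).symm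
    _ = ∏ cw : Ch parent r u,
          Nat.card (Σ v' : ↥(N u cw.1 v), Tm parent Desc C N cw.1 ↑v') := by
        exact Finset.prod_congr rfl fun cw _ => (nat_card_sigma' _).symm
    _ = Nat.card (∀ cw : Ch parent r u, Σ v' : ↥(N u cw.1 v), Tm parent Desc C N cw.1 ↑v') :=
        (Nat.card_pi).symm
    _ = Nat.card (Tm parent Desc C N u v) :=
        (Nat.card_eq_of_bijective _ hbij).symm

end DPAux
section DPMainAux

variable {Vq Vg : Type*}

lemma depth_iter (parent : Vq → Vq) (r : Vq) (depth : Vq → ℕ)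
    (hr : parent r = r) (hdepth : ∀ x, x ≠ r → depth (parent x) < depth x) :
    ∀ (k : ℕ) (x : Vq), depth (parent^[k] x) ≤ depth x := by
  intro k
  induction k with
  | zero => intro x; simp
  | succ k ih =>
    intro x
    rw [Function.iterate_succ_apply']
    by_cases h : parent^[k] x = r
    · rw [h, hr, ← h]; exact ih x
    · exact le_trans (le_of_lt (hdepth _ h)) (ih x)

end DPMainAux

/-- For every vertex `u` of the rooted tree and every candidate `v ∈ C(u)`,
the DP value `c u v` equals the number of maps from the subtree rooted at `u` into the
CST candidates mapping `u` to `v`, respecting candidate sets and mapping every tree edge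
of the subtree to a CST edge.  (`Desc u x` means `x` lies in the subtree rooted at `u`.) -/
theorem dp_counts_subtree_homomorphisms
    {Vq Vg : Type*} [Fintype Vq] [DecidableEq Vq] [Fintype Vg] [DecidableEq Vg]
    (parent : Vq → Vq) (r : Vq)
    (depth : Vq → ℕ)
    (hr : parent r = r)
    (hdepth : ∀ x, x ≠ r → depth (parent x) < depth x)   -- rooted-tree structure
    (hroot : ∀ x, ∃ n, parent^[n] x = r)
    (C : Vq → Finset Vg)
    (N : Vq → Vq → Vg → Finset Vg)                       -- adjacency lists N^u_{u_c}(v)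
    (hN : ∀ u uc v, N u uc v ⊆ C uc)
    (c : Vq → Vg → ℕ)
    (hc : ∀ u v, c u v =
      ∏ uc ∈ Finset.univ.filter (fun x => x ≠ r ∧ parent x = u), ∑ v' ∈ N u uc v, c uc v')
    -- `Desc u x`: x is a descendant of u (i.e. in the subtree of t rooted at u)
    (Desc : Vq → Vq → Prop)
    (hDesc : ∀ u x, Desc u x ↔ ∃ n, parent^[n] x = u) :
    ∀ (u : Vq) (v : Vg), v ∈ C u →
      c u v = Nat.card {M : {x : Vq // Desc u x} → Vg //
        (∀ hu : Desc u u, M ⟨u, hu⟩ = v) ∧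
        (∀ x, M x ∈ C x.1) ∧
        (∀ (x p : {y : Vq // Desc u y}), x.1 ≠ u → p.1 = parent x.1 →
          M x ∈ N p.1 x.1 (M p))} := by
  -- basic facts about `Desc`
  have hself : ∀ w : Vq, Desc w w := fun w => (hDesc w w).2 ⟨0, rfl⟩
  have hdc : ∀ (u : Vq) (cw : Ch parent r u) (x : Vq), Desc cw.1 x → Desc u x := by
    intro u cw x hd
    obtain ⟨n, hn⟩ := (hDesc _ _).1 hd
    exact (hDesc u x).2 ⟨n + 1, by rw [Function.iterate_succ_apply', hn, cw.2.2]⟩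
  have hneu : ∀ (u : Vq) (cw : Ch parent r u) (x : Vq), Desc cw.1 x → x ≠ u := by
    rintro u cw x hd rfl
    obtain ⟨n, hn⟩ := (hDesc _ _).1 hd
    have h1 : depth cw.1 ≤ depth x := by
      rw [← hn]; exact depth_iter parent r depth hr hdepth n x
    have h2 : depth (parent cw.1) < depth cw.1 := hdepth _ cw.2.1
    rw [cw.2.2] at h2
    omega
  have key : ∀ (u : Vq) (a b : Ch parent r u) (x : Vq) (m k : ℕ),
      parent^[m] x = a.1 → parent^[k] x = b.1 → m ≤ k → a = b := by
    intro u a b x m k hm hk hmk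
    have hb : parent^[k - m] a.1 = b.1 := by
      rw [← hm, ← Function.iterate_add_apply]
      have hkm : k - m + m = k := by omega
      rw [hkm]; exact hk
    rcases Nat.eq_zero_or_pos (k - m) with h0 | hpos
    · apply Subtype.ext
      rw [h0] at hb
      simpa using hb
    · exfalso
      obtain ⟨j, hj⟩ : ∃ j, k - m = j + 1 := ⟨k - m - 1, by omega⟩
      rw [hj, Function.iterate_succ_apply, a.2.2] at hb
      have h1 : depth b.1 ≤ depth u := by
        rw [← hb]; exact depth_iter parent r depth hr hdepth j u
      have h2 : depth (parent b.1) < depth b.1 := hdepth _ b.2.1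
      rw [b.2.2] at h2
      omega
  have huniq : ∀ (u : Vq) (a b : Ch parent r u) (x : Vq), Desc a.1 x → Desc b.1 x → a = b := by
    intro u a b x hda hdb
    obtain ⟨m, hm⟩ := (hDesc _ _).1 hda
    obtain ⟨k, hk⟩ := (hDesc _ _).1 hdb
    rcases le_total m k with h | h
    · exact key u a b x m k hm hk h
    · exact (key u b a x k m hk hm h).symm
  have hex : ∀ (u x : Vq), Desc u x → x ≠ u → ∃ cw : Ch parent r u, Desc cw.1 x := by
    intro u x hd hne
    obtain ⟨n, hn⟩ := (hDesc u x).1 hd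
    have hex0 : ∃ n, parent^[n] x = u := ⟨n, hn⟩
    have hn0 : parent^[Nat.find hex0] x = u := Nat.find_spec hex0
    have hne0 : Nat.find hex0 ≠ 0 := by
      intro h
      exact hne (by simpa [h] using hn0)
    obtain ⟨m, hm⟩ : ∃ m, Nat.find hex0 = m + 1 := ⟨Nat.find hex0 - 1, by omega⟩
    have hmu : parent (parent^[m] x) = u := by
      rw [hm, Function.iterate_succ_apply'] at hn0; exact hn0
    refine ⟨⟨parent^[m] x, ?_, hmu⟩, (hDesc _ _).2 ⟨m, rfl⟩⟩
    intro hR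
    have hru : r = u := by rw [← hmu, hR, hr]
    exact Nat.find_min hex0 (by omega : m < Nat.find hex0) (by rw [hR, hru])
  have hdpar : ∀ (w x : Vq), Desc w x → x ≠ w → Desc w (parent x) := by
    intro w x hd hne
    obtain ⟨n, hn⟩ := (hDesc _ _).1 hd
    have hne0 : n ≠ 0 := by
      intro h; exact hne (by simpa [h] using hn)
    obtain ⟨m, hm⟩ : ∃ m, n = m + 1 := ⟨n - 1, by omega⟩
    exact (hDesc _ _).2 ⟨m, by rw [hm, Function.iterate_succ_apply] at hn; exact hn⟩
  -- main induction on an upper bound on the "co-depth"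
  have H : ∀ (n : ℕ) (u : Vq), Finset.univ.sup depth + 1 - depth u ≤ n →
      ∀ v ∈ C u, c u v = Nat.card (Tm parent Desc C N u v) := by
    intro n
    induction n with
    | zero =>
      intro u hu
      exfalso
      have := Finset.le_sup (f := depth) (Finset.mem_univ u)
      omega
    | succ n ih =>
      intro u hu v hv
      refine step_lemma parent r Desc C N u v hv hself (hdc u) (hneu u) (huniq u)
        (hex u) hdpar hr hN c (hc u v) ?_
      intro uc hucr hucp v' hv'
      refine ih uc ?_ v' hv'
      have h1 : depth u < depth uc := by
        have := hdepth uc hucr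
        rw [hucp] at this
        exact this
      have h2 : depth uc ≤ Finset.univ.sup depth := Finset.le_sup (Finset.mem_univ uc)
      omega
  intro u v hv
  exact H (Finset.univ.sup depth + 1 - depth u) u le_rfl v hv
end

section
/- In the bottom-up refinement of CST construction, removing a candidate v ∈ C(u) that is invalid (i.e., N^u_{u_c}(v) = ∅ for some child u_c of u in the BFS tree, or no parent candidate v_p ∈ C(u_p) has v ∈ N^{u_p}_u(v_p)) preserves soundness: every subgraph-isomorphism embedding M of q in G still satisfies M(u') ∈ C(u') for all query vertices u' after removal. -/
/-- In the bottom-up refinement, removing an invalid candidate `v ∈ C(u)`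
(one with an empty adjacency list towards some child, or not adjacent to any parent
candidate) preserves soundness of the CST: every subgraph-isomorphism embedding `M` of
`q` in `G` still maps each query vertex `u'` into the (updated) candidate set. -/
theorem refinement_preserves_soundness
    {Vq Vg L : Type*} [DecidableEq Vq] [DecidableEq Vg]
    (adjq : Vq → Vq → Prop) (adjG : Vg → Vg → Prop)
    (lq : Vq → L) (lG : Vg → L)
    (parent : Vq → Vq) (r : Vq)                 -- the rooted BFS tree t_q of q
    (hGsym : ∀ a b, adjG a b → adjG b a)
    (htree : ∀ x, x ≠ r → adjq (parent x) x)    -- tree edges are query edges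
    (C : Vq → Set Vg)
    -- soundness of the CST before removal
    (hsound : ∀ M : Vq → Vg, Function.Injective M → (∀ x, lq x = lG (M x)) →
      (∀ a b, adjq a b → adjG (M a) (M b)) → ∀ u', M u' ∈ C u')
    (u : Vq) (v : Vg)
    -- v is an invalid candidate of u
    (hinvalid :
      (∃ uc, uc ≠ r ∧ parent uc = u ∧ ∀ v' ∈ C uc, ¬ adjG v v') ∨
      (u ≠ r ∧ ∀ vp ∈ C (parent u), ¬ adjG vp v)) :
    ∀ M : Vq → Vg, Function.Injective M → (∀ x, lq x = lG (M x)) →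
      (∀ a b, adjq a b → adjG (M a) (M b)) →
      ∀ u', M u' ∈ Function.update C u (C u \ {v}) u' := by
  intro M hinj hlab hadj u'
  have hC := hsound M hinj hlab hadj
  rcases eq_or_ne u' u with rfl | hne
  · rw [Function.update_self]
    refine ⟨hC u', ?_⟩
    simp only [Set.mem_singleton_iff]
    intro hMv
    rcases hinvalid with ⟨uc, hucr, hpc, hnon⟩ | ⟨hur, hnon⟩
    · exact hnon (M uc) (hC uc) (hMv ▸ hpc ▸ hadj _ _ (htree uc hucr))
    · exact hnon (M (parent u')) (hC _) (hMv ▸ hadj _ _ (htree u' hur))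
  · rw [Function.update_of_ne hne]; exact hC u'
end

section
/- If every root-to-leaf path constraint is enforced by top-down construction and bottom-up refinement (i.e., every surviving candidate v ∈ C(u) has a nonempty adjacency list N^u_{u_c}(v) into C(u_c) for each child u_c, and is in the adjacency list of some parent candidate), then for every surviving candidate v ∈ C(u) there exists a homomorphism of the whole spanning tree t_q into the CST mapping u to v. -/
open Classical in
/-- Upward chain of candidates along the ancestors of `u`, starting at `v`. -/
noncomputable def cstW {Vq Vg : Type*} (parent : Vq → Vq) (r : Vq)
    (C : Vq → Set Vg) (N : Vq → Vq → Vg → Set Vg)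
    (hup : ∀ x, x ≠ r → ∀ v ∈ C x, ∃ vp ∈ C (parent x), v ∈ N (parent x) x vp)
    (u : Vq) (v : Vg) : ℕ → Vg
  | 0 => v
  | n+1 =>
    let w := cstW parent r C N hup u v n
    if h : parent^[n] u ≠ r ∧ w ∈ C (parent^[n] u) then
      (hup (parent^[n] u) h.1 w h.2).choose
    else w

theorem cstW_mem {Vq Vg : Type*} (parent : Vq → Vq) (r : Vq)
    (hr : parent r = r)
    (C : Vq → Set Vg) (N : Vq → Vq → Vg → Set Vg)
    (hup : ∀ x, x ≠ r → ∀ v ∈ C x, ∃ vp ∈ C (parent x), v ∈ N (parent x) x vp)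
    (u : Vq) (v : Vg) (hv : v ∈ C u) :
    ∀ n, cstW parent r C N hup u v n ∈ C (parent^[n] u) := by
  intro n
  induction n with
  | zero => simpa [cstW] using hv
  | succ n ih =>
    rw [cstW]
    by_cases hc : parent^[n] u ≠ r ∧ cstW parent r C N hup u v n ∈ C (parent^[n] u)
    · rw [dif_pos hc]
      have := (hup (parent^[n] u) hc.1 _ hc.2).choose_spec.1
      rwa [Function.iterate_succ_apply']
    · rw [dif_neg hc]
      push_neg at hc
      have hz : parent^[n] u = r := by
        by_contra hne
        exact (hc hne) ih
      have heq : parent^[n+1] u = parent^[n] u := by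
        rw [Function.iterate_succ_apply', hz, hr]
      rw [heq]
      exact ih

theorem cstW_link {Vq Vg : Type*} (parent : Vq → Vq) (r : Vq)
    (hr : parent r = r)
    (C : Vq → Set Vg) (N : Vq → Vq → Vg → Set Vg)
    (hup : ∀ x, x ≠ r → ∀ v ∈ C x, ∃ vp ∈ C (parent x), v ∈ N (parent x) x vp)
    (u : Vq) (v : Vg) (hv : v ∈ C u) :
    ∀ n, parent^[n] u ≠ r →
      cstW parent r C N hup u v n ∈
        N (parent^[n+1] u) (parent^[n] u) (cstW parent r C N hup u v (n+1)) := by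
  intro n hn
  have hc : parent^[n] u ≠ r ∧ cstW parent r C N hup u v n ∈ C (parent^[n] u) :=
    ⟨hn, cstW_mem parent r hr C N hup u v hv n⟩
  have hspec := (hup (parent^[n] u) hc.1 _ hc.2).choose_spec.2
  have heq : cstW parent r C N hup u v (n+1) = (hup (parent^[n] u) hc.1 _ hc.2).choose := by
    rw [cstW, dif_pos hc]
  rw [heq, Function.iterate_succ_apply']
  exact hspec

open Classical in
/-- The full assignment: ancestors of `u` get chain values, other vertices are filled
top-down using `hdown`. -/
noncomputable def cstF {Vq Vg : Type*} [DecidableEq Vq]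
    (parent : Vq → Vq) (r : Vq) (depth : Vq → ℕ)
    (hr : parent r = r)
    (hdepth : ∀ x, x ≠ r → depth (parent x) < depth x)
    (hroot : ∀ x, ∃ n, parent^[n] x = r)
    (C : Vq → Set Vg) (N : Vq → Vq → Vg → Set Vg)
    (hN : ∀ p c v, N p c v ⊆ C c)
    (hdown : ∀ x, ∀ v ∈ C x, ∀ c, c ≠ r → parent c = x → (N x c v).Nonempty)
    (hup : ∀ x, x ≠ r → ∀ v ∈ C x, ∃ vp ∈ C (parent x), v ∈ N (parent x) x vp)
    (u : Vq) (v : Vg) (hv : v ∈ C u) : (x : Vq) → {g : Vg // g ∈ C x} :=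
  fun x =>
    if h : ∃ n, parent^[n] u = x then
      ⟨cstW parent r C N hup u v (Nat.find h), by
        have := cstW_mem parent r hr C N hup u v hv (Nat.find h)
        rwa [Nat.find_spec h] at this⟩
    else
      have hxr : x ≠ r := fun he => h ⟨(hroot u).choose, by
        rw [(hroot u).choose_spec, he]⟩
      let g := cstF parent r depth hr hdepth hroot C N hN hdown hup u v hv (parent x)
      have hne := hdown (parent x) g.1 g.2 x hxr rfl
      ⟨hne.choose, hN (parent x) x g.1 hne.choose_spec⟩
  termination_by x => depth x
  decreasing_by exact hdepth x hxr

/-- after top-down construction and bottom-up refinement, every surviving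
candidate `v ∈ C(u)` has a nonempty adjacency list towards each child and lies in the
adjacency list of some parent candidate; consequently every surviving candidate extends
to a homomorphism of the whole rooted spanning tree `t_q` into the CST mapping `u` to
`v`. -/
theorem surviving_candidate_extends_to_tree_homomorphism
    {Vq Vg : Type*} [Fintype Vq] [DecidableEq Vq]
    (parent : Vq → Vq) (r : Vq)
    (depth : Vq → ℕ)
    (hr : parent r = r)
    (hdepth : ∀ x, x ≠ r → depth (parent x) < depth x)  -- rooted-tree structure
    (hroot : ∀ x, ∃ n, parent^[n] x = r)                 -- spanning tree: connected to root
    (C : Vq → Set Vg)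
    (N : Vq → Vq → Vg → Set Vg)                          -- adjacency lists N^u_{u_c}(v)
    (hN : ∀ p c v, N p c v ⊆ C c)
    -- downward condition of the refinement: nonempty adjacency list towards each child
    (hdown : ∀ x, ∀ v ∈ C x, ∀ c, c ≠ r → parent c = x → (N x c v).Nonempty)
    -- upward condition: each surviving candidate is adjacent to some parent candidate
    (hup : ∀ x, x ≠ r → ∀ v ∈ C x, ∃ vp ∈ C (parent x), v ∈ N (parent x) x vp) :
    ∀ u, ∀ v ∈ C u, ∃ M : Vq → Vg,
      M u = v ∧ (∀ x, M x ∈ C x) ∧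
      ∀ x, x ≠ r → M x ∈ N (parent x) x (M (parent x)) := by
  intro u v hv
  classical
  set F := cstF parent r depth hr hdepth hroot C N hN hdown hup u v hv with hF
  refine ⟨fun x => (F x).1, ?_, fun x => (F x).2, ?_⟩
  · have h0 : ∃ n, parent^[n] u = u := ⟨0, rfl⟩
    have hfind : Nat.find h0 = 0 := by
      rw [Nat.find_eq_zero]
      rfl
    have : (F u).1 = cstW parent r C N hup u v (Nat.find h0) := by
      rw [hF, cstF.eq_1, dif_pos h0]
    rw [hfind] at this
    show (F u).1 = v
    rw [this]
    simp [cstW]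
  · intro x hx
    by_cases h : ∃ n, parent^[n] u = x
    · -- x is an ancestor of u
      set k := Nat.find h with hk
      have hkx : parent^[k] u = x := Nat.find_spec h
      -- vertices along the chain up to k are not r
      have hrit : ∀ m, parent^[m] r = r := by
        intro m
        induction m with
        | zero => rfl
        | succ m ih => rw [Function.iterate_succ_apply', ih, hr]
      have hner : ∀ m ≤ k, parent^[m] u ≠ r := by
        intro m hm he
        apply hx
        rw [← hkx]
        obtain ⟨d, hd⟩ := Nat.exists_eq_add_of_le hm
        rw [hd, Nat.add_comm, Function.iterate_add_apply, he, hrit]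
      -- depth strictly decreases along the chain
      have hstrict : ∀ d j, (∀ m, m ≤ j + d → parent^[m] u ≠ r) →
          depth (parent^[j + d + 1] u) < depth (parent^[j] u) := by
        intro d
        induction d with
        | zero =>
          intro j hj
          rw [Function.iterate_succ_apply']
          exact hdepth _ (hj j (by omega))
        | succ d ih =>
          intro j hj
          have h1 : depth (parent^[j + d + 1 + 1] u) < depth (parent^[j + d + 1] u) := by
            rw [Function.iterate_succ_apply' parent (j + d + 1)]
            exact hdepth _ (hj (j + d + 1) (by omega))
          have h2 := ih j (fun m hm => hj m (by omega))
          calc depth (parent^[j + (d + 1) + 1] u) = depth (parent^[j + d + 1 + 1] u) := by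
                ring_nf
            _ < depth (parent^[j + d + 1] u) := h1
            _ < depth (parent^[j] u) := h2
      -- parent x is an ancestor with minimal index k + 1
      have hpx : parent^[k + 1] u = parent x := by
        rw [Function.iterate_succ_apply', hkx]
      have hp : ∃ n, parent^[n] u = parent x := ⟨k + 1, hpx⟩
      have hfindp : Nat.find hp = k + 1 := by
        have hle : Nat.find hp ≤ k + 1 := Nat.find_le hpx
        rcases Nat.lt_or_ge (Nat.find hp) (k + 1) with hlt | hge
        · exfalso
          have hj : parent^[Nat.find hp] u = parent x := Nat.find_spec hp
          have hjk : Nat.find hp ≤ k := by omega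
          obtain ⟨d, hd⟩ := Nat.exists_eq_add_of_le hjk
          have hcontra : depth (parent^[k + 1] u) < depth (parent^[Nat.find hp] u) := by
            have := hstrict (d) (Nat.find hp) (fun m hm => hner m (by omega))
            rwa [← hd] at this
          rw [hpx, hj] at hcontra
          exact lt_irrefl _ hcontra
        · omega
      have hFx : (F x).1 = cstW parent r C N hup u v k := by
        rw [hF, cstF.eq_1, dif_pos h]
      have hFpx : (F (parent x)).1 = cstW parent r C N hup u v (Nat.find hp) := by
        rw [hF, cstF.eq_1, dif_pos hp]
      rw [hfindp] at hFpx
      show (F x).1 ∈ N (parent x) x ((F (parent x)).1)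
      rw [hFx, hFpx, ← hpx, ← hkx]
      exact cstW_link parent r hr C N hup u v hv k (hner k le_rfl)
    · -- x is not an ancestor: use the defining choice
      have hFx : F x =
          have hxr : x ≠ r := fun he => h ⟨(hroot u).choose, by
            rw [(hroot u).choose_spec, he]⟩
          let g := F (parent x)
          have hne := hdown (parent x) g.1 g.2 x hxr rfl
          (⟨hne.choose, hN (parent x) x g.1 hne.choose_spec⟩ : {g : Vg // g ∈ C x}) := by
        rw [hF, cstF.eq_1, dif_neg h]
      show (F x).1 ∈ N (parent x) x ((F (parent x)).1)
      rw [hFx]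
      exact (hdown (parent x) (F (parent x)).1 (F (parent x)).2 x
        (fun he => h ⟨(hroot u).choose, by rw [(hroot u).choose_spec, he]⟩) rfl).choose_spec
end
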